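/- Let φ = Q₁x₁…Qₙxₙ(γ) be a quantified Boolean formula with alternating quantifiers Q₁ = ∃, Q₂ = ∀, …, n even, and γ a propositional formula over the variables x₁,…,xₙ. Let Env_φ be the two-agent environment encoding φ and let φ* be the formula ¬D_∅¬( D_{{σ(1)}}( agree(1) → ¬D_{{σ(2)}}¬( agree(2) ∧ D_{{σ(1)}}( agree(3) → ¬D_{{σ(2)}}¬( agree(4) ∧ … D_{{σ(1)}}( agree(n−1) → γ⁺ ) … ))))), where γ⁺ is obtained from γ by replacing every occurrence of x_j by val₂(x_j). Then φ is true (under the standard semantics of quantified Boolean formulas) if and only if Env_φ, Σ^{unif,det}(Env_φ) ⊨ φ*, i.e., φ* holds at (r,0) for every run r of I(Env_φ, Σ^{unif,det}(Env_φ)). -/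

import Mathlib

namespace Paper

open Classical

/-- An environment for a set of agents. -/
structure Env (Agent State Obs Act PropV : Type) where
  init : Set State
  acts : Agent → Set Act
  trans : State → (Agent → Act) → State → Prop
  obs : Agent → State → Obs
  val : State → Set PropV
  acts_ne : ∀ i, (acts i).Nonempty
  serial : ∀ s a, (∀ i, a i ∈ acts i) → ∃ t, trans s a t

variable {Agent State Obs Act PropV Var Gl Idx Loc : Type}

/-- A strategy: a choice of a set of actions at each state. -/
abbrev Strategy (State Act : Type) := State → Set Act

def IsStrategy (E : Env Agent State Obs Act PropV) (i : Agent) (α : Strategy State Act) : Prop :=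
  ∀ s, (α s).Nonempty ∧ α s ⊆ E.acts i

def UniformStrat (E : Env Agent State Obs Act PropV) (i : Agent) (α : Strategy State Act) : Prop :=
  ∀ s t, E.obs i s = E.obs i t → α s = α t

def DetStrat (α : Strategy State Act) : Prop := ∀ s, ∃ a, α s = {a}

abbrev JointStrategy (Agent State Act : Type) := Agent → Strategy State Act

def IsJoint (E : Env Agent State Obs Act PropV) (α : JointStrategy Agent State Act) : Prop :=
  ∀ i, IsStrategy E i (α i)

/-- The set of all locally uniform joint strategies. -/
def SigmaUnif (E : Env Agent State Obs Act PropV) : Set (JointStrategy Agent State Act) :=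
  {α | ∀ i, IsStrategy E i (α i) ∧ UniformStrat E i (α i)}

/-- The set of all locally uniform deterministic joint strategies. -/
def SigmaUnifDet (E : Env Agent State Obs Act PropV) : Set (JointStrategy Agent State Act) :=
  {α | ∀ i, IsStrategy E i (α i) ∧ UniformStrat E i (α i) ∧ DetStrat (α i)}

/-- Indices for the components of a global state in strategy space:
the environment `e`, the basic agents, and the strategic agents `σ(i)`. -/
inductive SIdx (Agent : Type) : Type
  | env : SIdx Agent
  | ag : Agent → SIdx Agent
  | str : Agent → SIdx Agent

/-- Global states in strategy space: a state of the environment together with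
a joint strategy. -/
abbrev GState (Agent State Act : Type) := State × JointStrategy Agent State Act

/-- An interpreted system: a set of runs, a local-state function giving the
component of a global state for each index, and a propositional assignment. -/
structure IS (Gl Idx Loc PropV : Type) where
  runs : Set (ℕ → Gl)
  loc : Idx → Gl → Loc
  val : Gl → Set PropV

/-- Equality of the `i`-components of two global states. -/
def IS.sameLoc (M : IS Gl Idx Loc PropV) (i : Idx) (g g' : Gl) : Prop := M.loc i g = M.loc i g'

/-- Syntax of the extended temporal epistemic logic ETL/ESL. -/
inductive ESL (Idx PropV Var : Type) : Type
  | tt : ESL Idx PropV Var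
  | atom (p : PropV) : ESL Idx PropV Var
  | neg (φ : ESL Idx PropV Var) : ESL Idx PropV Var
  | conj (φ ψ : ESL Idx PropV Var) : ESL Idx PropV Var
  | next (φ : ESL Idx PropV Var) : ESL Idx PropV Var
  | until_ (φ ψ : ESL Idx PropV Var) : ESL Idx PropV Var
  | box (φ : ESL Idx PropV Var) : ESL Idx PropV Var
  | all (φ : ESL Idx PropV Var) : ESL Idx PropV Var
  | exv (x : Var) (φ : ESL Idx PropV Var) : ESL Idx PropV Var
  | leq (i : Idx) (x : Var) : ESL Idx PropV Var
  | dk (G : Set Idx) (φ : ESL Idx PropV Var) : ESL Idx PropV Var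
  | ck (G : Set Idx) (φ : ESL Idx PropV Var) : ESL Idx PropV Var

/-- The common-knowledge reachability relation on points: the reflexive-transitive
closure of the union over `i ∈ Grp` of the "same `i`-component" relations. -/
def ckRel (M : IS Gl Idx Loc PropV) (Grp : Set Idx) :
    ((ℕ → Gl) × ℕ) → ((ℕ → Gl) × ℕ) → Prop :=
  Relation.ReflTransGen (fun p q => q.1 ∈ M.runs ∧ ∃ i ∈ Grp, M.sameLoc i (p.1 p.2) (q.1 q.2))

variable [DecidableEq Var]

/-- Satisfaction of an ESL formula at a point `(r,m)` of an interpreted system,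
relative to a context `Γ` interpreting variables as global states. -/
def esat (M : IS Gl Idx Loc PropV) : ESL Idx PropV Var → (Var → Gl) → (ℕ → Gl) → ℕ → Prop
  | .tt, _, _, _ => True
  | .atom p, _, r, m => p ∈ M.val (r m)
  | .neg φ, Γ, r, m => ¬ esat M φ Γ r m
  | .conj φ ψ, Γ, r, m => esat M φ Γ r m ∧ esat M ψ Γ r m
  | .next φ, Γ, r, m => esat M φ Γ r (m+1)
  | .until_ φ ψ, Γ, r, m =>
      ∃ m', m ≤ m' ∧ esat M ψ Γ r m' ∧ ∀ k, m ≤ k → k < m' → esat M φ Γ r k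
  | .box φ, Γ, r, m => ∀ m', m ≤ m' → esat M φ Γ r m'
  | .all φ, Γ, r, m => ∀ r' ∈ M.runs, (∀ k, k ≤ m → r' k = r k) → esat M φ Γ r' m
  | .exv x φ, Γ, r, m => ∃ r' ∈ M.runs, ∃ m' : ℕ, esat M φ (Function.update Γ x (r' m')) r m
  | .leq i x, Γ, r, m => M.sameLoc i (r m) (Γ x)
  | .dk Grp φ, Γ, r, m =>
      ∀ r' ∈ M.runs, ∀ m', (∀ i ∈ Grp, M.sameLoc i (r' m') (r m)) → esat M φ Γ r' m'
  | .ck Grp φ, Γ, r, m =>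
      ∀ r' ∈ M.runs, ∀ m', ckRel M Grp (r, m) (r', m') → esat M φ Γ r' m'

namespace ESL
def ff : ESL Idx PropV Var := .neg .tt
def impf (φ ψ : ESL Idx PropV Var) : ESL Idx PropV Var := .neg (.conj φ (.neg ψ))
def orf (φ ψ : ESL Idx PropV Var) : ESL Idx PropV Var := .neg (.conj (.neg φ) (.neg ψ))
def iffF (φ ψ : ESL Idx PropV Var) : ESL Idx PropV Var := .conj (impf φ ψ) (impf ψ φ)
def EX (φ : ESL Idx PropV Var) : ESL Idx PropV Var := .neg (.all (.neg (.next φ)))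
end ESL

def bigConj (l : List (ESL Idx PropV Var)) : ESL Idx PropV Var := l.foldr .conj .tt
def bigDisj (l : List (ESL Idx PropV Var)) : ESL Idx PropV Var := l.foldr ESL.orf ESL.ff

/-- The local-state function of strategy space: the `e` component is the state,
the `i` component is agent `i`'s observation, and the `σ(i)` component is
agent `i`'s strategy. -/
def sLoc (E : Env Agent State Obs Act PropV) :
    SIdx Agent → GState Agent State Act → State ⊕ Obs ⊕ Strategy State Act
  | .env, g => Sum.inl g.1
  | .ag i, g => Sum.inr (Sum.inl (E.obs i g.1))
  | .str i, g => Sum.inr (Sum.inr (g.2 i))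

/-- The runs of the strategy space `I(Env,Σ)`. -/
def IsRun (E : Env Agent State Obs Act PropV) (Sig : Set (JointStrategy Agent State Act))
    (r : ℕ → GState Agent State Act) : Prop :=
  (r 0).1 ∈ E.init ∧ (r 0).2 ∈ Sig ∧
  ∀ m, (r (m+1)).2 = (r m).2 ∧
    ∃ a, (∀ j, a j ∈ (r m).2 j (r m).1) ∧ E.trans (r m).1 a (r (m+1)).1

/-- The strategy space interpreted system `I(Env,Σ)`. -/
def stratSpace (E : Env Agent State Obs Act PropV) (Sig : Set (JointStrategy Agent State Act)) :
    IS (GState Agent State Act) (SIdx Agent) (State ⊕ Obs ⊕ Strategy State Act) PropV :=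
  { runs := {r | IsRun E Sig r}, loc := sLoc E, val := fun g => E.val g.1 }

/-- `Env[S/I]`: the environment with all states initial. -/
def Env.allInit (E : Env Agent State Obs Act PropV) : Env Agent State Obs Act PropV :=
  { E with init := Set.univ }

end Paper
namespace Paper

/-- Propositional formulas over variables `x₁,…,xₙ`. -/
inductive PForm (n : ℕ) : Type
  | var (j : Fin n) : PForm n
  | neg (φ : PForm n) : PForm n
  | conj (φ ψ : PForm n) : PForm n

/-- Evaluation of a propositional formula under an assignment. -/
def PForm.eval {n : ℕ} (v : Fin n → Bool) : PForm n → Prop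
  | .var j => v j = true
  | .neg φ => ¬ PForm.eval v φ
  | .conj φ ψ => PForm.eval v φ ∧ PForm.eval v ψ

/-- Truth of the quantified Boolean formula `Q₁x₁…Qₙxₙ(γ)` with alternating
quantifiers `∃∀∃∀…`, the variables being assigned in order: `k` counts the
variables already assigned. -/
def altTruth (n : ℕ) (γ : PForm n) : (k : ℕ) → (Fin n → Bool) → Prop
  | k, v =>
    if h : k < n then
      if k % 2 = 0 then ∃ b, altTruth n γ (k+1) (Function.update v ⟨k, h⟩ b)
      else ∀ b, altTruth n γ (k+1) (Function.update v ⟨k, h⟩ b)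
    else γ.eval v
  termination_by k => n - k
  decreasing_by all_goals omega

/-- The QBF `∃x₁∀x₂…Qₙxₙ(γ)` is true. -/
def QBFtrue (n : ℕ) (γ : PForm n) : Prop := altTruth n γ 0 (fun _ => false)

/-- States of the environment `Env_φ`: the initial state `s₀` and the states
`s_{t,j,k}` (here `t : Fin n` codes time `t+1`). -/
inductive QSt (n : ℕ) : Type
  | s0 : QSt n
  | cell (t : Fin n) (j k : Bool) : QSt n

/-- Both agents observe only the moment of time. -/
def qObs {n : ℕ} : Fin 2 → QSt n → ℕ
  | _, .s0 => 0
  | _, .cell t _ _ => t.1 + 1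

/-- The propositional assignment: `Sum.inl t` is the proposition `p_t`, and
`Sum.inr false`, `Sum.inr true` are `q₁`, `q₂`. -/
def qVal {n : ℕ} : QSt n → Set (ℕ ⊕ Bool)
  | .s0 => {Sum.inl 0}
  | .cell t j k =>
      {Sum.inl (t.1 + 1)} ∪ (if j then {Sum.inr false} else ∅) ∪
        (if k then {Sum.inr true} else ∅)

/-- The transitions of `Env_φ`: the joint action chosen at time `t` is recorded
in the state at time `t+1`, and the final states loop. -/
inductive qTrans {n : ℕ} : QSt n → (Fin 2 → Bool) → QSt n → Prop
  | start (a : Fin 2 → Bool) (h : 0 < n) :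
      qTrans .s0 a (.cell ⟨0, h⟩ (a 0) (a 1))
  | step (t : Fin n) (j k : Bool) (a : Fin 2 → Bool) (h : t.1 + 1 < n) :
      qTrans (.cell t j k) a (.cell ⟨t.1 + 1, h⟩ (a 0) (a 1))
  | last (t : Fin n) (j k : Bool) (a : Fin 2 → Bool) (h : t.1 + 1 = n) :
      qTrans (.cell t j k) a (.cell t j k)

/-- The two-agent environment `Env_φ` encoding a QBF with `n` variables. -/
def qEnv (n : ℕ) (hn : 0 < n) : Env (Fin 2) (QSt n) ℕ Bool (ℕ ⊕ Bool) where
  init := {.s0}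
  acts := fun _ => Set.univ
  trans := qTrans
  obs := qObs
  val := qVal
  acts_ne := fun _ => ⟨true, trivial⟩
  serial := by
    intro s a _
    cases s with
    | s0 => exact ⟨_, qTrans.start a hn⟩
    | cell t j k =>
        by_cases h : t.1 + 1 < n
        · exact ⟨_, qTrans.step t j k a h⟩
        · exact ⟨_, qTrans.last t j k a (by omega)⟩

/-- `val₂(x_j) = K_{σ(2)}(p_{j-1} → EX q₂)`: agent 2's strategy encodes an
assignment making `x_j` true. (Agents are `0`, `1` here, so agent 2 is `1`;
`q₂ = Sum.inr true`.) -/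
def val2 {n : ℕ} (j : Fin n) : ESL (SIdx (Fin 2)) (ℕ ⊕ Bool) Unit :=
  .dk {SIdx.str 1} (ESL.impf (.atom (Sum.inl j.1)) (ESL.EX (.atom (Sum.inr true))))

/-- `γ⁺`: replace each variable `x_j` by `val₂(x_j)`. -/
def gplus {n : ℕ} : PForm n → ESL (SIdx (Fin 2)) (ℕ ⊕ Bool) Unit
  | .var j => val2 j
  | .neg φ => .neg (gplus φ)
  | .conj φ ψ => .conj (gplus φ) (gplus ψ)

/-- `agree(m) = ⋀_{j=1…m} D_{{σ(1),σ(2)}}(p_{j-1} → (EX q₁ ↔ EX q₂))`. -/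
def agreeF (m : ℕ) : ESL (SIdx (Fin 2)) (ℕ ⊕ Bool) Unit :=
  bigConj ((List.range m).map fun j =>
    ESL.dk {SIdx.str 0, SIdx.str 1}
      (ESL.impf (.atom (Sum.inl j))
        (ESL.iffF (ESL.EX (.atom (Sum.inr false))) (ESL.EX (.atom (Sum.inr true))))))

/-- The alternating nesting
`D_{σ(1)}(agree(m) → …)` / `¬D_{σ(2)}¬(agree(m) ∧ …)` for `m = 1,…,n−1`,
with innermost formula `g = γ⁺`. -/
def qLevels (n : ℕ) (g : ESL (SIdx (Fin 2)) (ℕ ⊕ Bool) Unit) :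
    (m : ℕ) → ESL (SIdx (Fin 2)) (ℕ ⊕ Bool) Unit
  | m =>
    let inner := if h : m + 1 < n then qLevels n g (m+1) else g
    if m % 2 = 1 then .dk {SIdx.str 0} (ESL.impf (agreeF m) inner)
    else .neg (.dk {SIdx.str 1} (.neg (.conj (agreeF m) inner)))
  termination_by m => n - m
  decreasing_by omega

/-- The formula `φ*`. -/
def qbfFormula (n : ℕ) (γ : PForm n) : ESL (SIdx (Fin 2)) (ℕ ⊕ Bool) Unit :=
  .neg (.dk (∅ : Set (SIdx (Fin 2))) (.neg (qLevels n (gplus γ) 1)))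


/-! ### Auxiliary development for the reduction -/

section Reduction

variable {n : ℕ}

/-- A canonical state with observation `o` (for `o ≤ n`). -/
def stateOf (hn : 0 < n) : ℕ → QSt n
  | 0 => .s0
  | o+1 => .cell ⟨min o (n-1), by omega⟩ false false

lemma qObs_le (i : Fin 2) (s : QSt n) : qObs i s ≤ n := by
  cases s with
  | s0 => exact Nat.zero_le _
  | cell t j k => simp only [qObs]; omega

lemma qObs_stateOf (hn : 0 < n) (i : Fin 2) (o : ℕ) (ho : o ≤ n) :
    qObs i (stateOf hn o) = o := by
  cases o with
  | zero => rfl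
  | succ k => simp only [stateOf, qObs]; omega

lemma qObs_indep (i i' : Fin 2) (s : QSt n) : qObs i s = qObs i' s := by
  cases s <;> rfl

/-- The boolean function extracted from a (deterministic uniform) strategy. -/
noncomputable def bf (hn : 0 < n) (α : Strategy (QSt n) Bool) (o : ℕ) : Bool :=
  @decide (true ∈ α (stateOf hn o)) (Classical.propDecidable _)

lemma bf_spec (hn : 0 < n) {i : Fin 2} {α : Strategy (QSt n) Bool}
    (hu : UniformStrat (qEnv n hn) i α) (hd : DetStrat α) (s : QSt n) :
    α s = {bf hn α (qObs i s)} := by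
  obtain ⟨a, ha⟩ := hd s
  have hobs : (qEnv n hn).obs i (stateOf hn (qObs i s)) = (qEnv n hn).obs i s := by
    simpa [qEnv] using qObs_stateOf hn i (qObs i s) (qObs_le i s)
  have heq : α (stateOf hn (qObs i s)) = α s := hu _ _ hobs
  have : bf hn α (qObs i s) = a := by
    unfold bf
    rw [heq, ha]
    cases a <;> simp
  rw [ha, this]


/-- The deterministic sequence of states generated by boolean strategy
functions `g₁ g₂`. -/
def stateRun (hn : 0 < n) (g₁ g₂ : ℕ → Bool) : ℕ → QSt n
  | 0 => .s0
  | m+1 => .cell ⟨min m (n-1), by omega⟩ (g₁ (min m (n-1))) (g₂ (min m (n-1)))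

lemma qObs_stateRun (hn : 0 < n) (g₁ g₂ : ℕ → Bool) (i : Fin 2) (m : ℕ) :
    qObs i (stateRun hn g₁ g₂ m) = min m n := by
  cases m with
  | zero => simp [stateRun, qObs]
  | succ k => simp only [stateRun, qObs]; omega

lemma qTrans_det {s : QSt n} {a : Fin 2 → Bool} {s' s'' : QSt n}
    (h1 : qTrans s a s') (h2 : qTrans s a s'') : s' = s'' := by
  cases h1 <;> cases h2 <;> first | rfl | omega

lemma stateRun_trans (hn : 0 < n) (g₁ g₂ : ℕ → Bool) (m : ℕ) (a : Fin 2 → Bool)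
    (ha : m < n → a 0 = g₁ m ∧ a 1 = g₂ m) :
    qTrans (stateRun hn g₁ g₂ m) a (stateRun hn g₁ g₂ (m+1)) := by
  cases m with
  | zero =>
    obtain ⟨h0, h1⟩ := ha hn
    have hk : min 0 (n-1) = 0 := by omega
    have e2 : stateRun hn g₁ g₂ 1 = QSt.cell ⟨0, hn⟩ (a 0) (a 1) := by
      simp only [stateRun, hk, h0, h1]
    rw [e2]
    exact .start a hn
  | succ k =>
    by_cases h : k + 1 < n
    · obtain ⟨h0, h1⟩ := ha h
      have hk : min k (n-1) = k := by omega
      have hk1 : min (k+1) (n-1) = k+1 := by omega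
      have e1 : stateRun hn g₁ g₂ (k+1) = QSt.cell ⟨k, by omega⟩ (g₁ k) (g₂ k) := by
        simp only [stateRun, hk]
      have e2 : stateRun hn g₁ g₂ (k+2) =
          QSt.cell ⟨k+1, by omega⟩ (a 0) (a 1) := by
        simp only [stateRun, hk1, h0, h1]
      rw [e1, e2]
      exact .step ⟨k, by omega⟩ (g₁ k) (g₂ k) a (by show k+1 < n; omega)
    · have hk : min k (n-1) = n - 1 := by omega
      have hk1 : min (k+1) (n-1) = n - 1 := by omega
      have e1 : stateRun hn g₁ g₂ (k+1) =
          QSt.cell ⟨n-1, by omega⟩ (g₁ (n-1)) (g₂ (n-1)) := by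
        simp only [stateRun, hk]
      have e2 : stateRun hn g₁ g₂ (k+2) =
          QSt.cell ⟨n-1, by omega⟩ (g₁ (n-1)) (g₂ (n-1)) := by
        simp only [stateRun, hk1]
      rw [e1, e2]
      exact .last ⟨n-1, by omega⟩ (g₁ (n-1)) (g₂ (n-1)) a (by show n-1+1 = n; omega)

/-- A strategy membership fact unfolding. -/
lemma sud_spec {σ : JointStrategy (Fin 2) (QSt n) Bool} (hn : 0 < n)
    (hσ : σ ∈ SigmaUnifDet (qEnv n hn)) (i : Fin 2) (s : QSt n) :
    σ i s = {bf hn (σ i) (qObs i s)} :=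
  bf_spec hn (hσ i).2.1 (hσ i).2.2 s

lemma mem_runs_iff (hn : 0 < n) (Sig : Set (JointStrategy (Fin 2) (QSt n) Bool))
    (r : ℕ → GState (Fin 2) (QSt n) Bool) :
    r ∈ (stratSpace (qEnv n hn) Sig).runs ↔ IsRun (qEnv n hn) Sig r := Iff.rfl

/-- Structure of runs: the strategy stays constant and the state sequence is
the deterministic one induced by the strategies' boolean functions. -/
lemma run_struct (hn : 0 < n) {r : ℕ → GState (Fin 2) (QSt n) Bool}
    (hr : r ∈ (stratSpace (qEnv n hn) (SigmaUnifDet (qEnv n hn))).runs) (m : ℕ) :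
    r m = (stateRun hn (bf hn ((r 0).2 0)) (bf hn ((r 0).2 1)) m, (r 0).2) := by
  obtain ⟨h0, hσ, hstep⟩ := hr
  induction m with
  | zero =>
    have h1 : (r 0).1 = QSt.s0 := h0
    exact Prod.ext h1 rfl
  | succ m ih =>
    obtain ⟨hsnd, a, haj, htr⟩ := hstep m
    have hfst : (r m).1 = stateRun hn (bf hn ((r 0).2 0)) (bf hn ((r 0).2 1)) m := by
      rw [ih]
    have hsnd2 : (r m).2 = (r 0).2 := by rw [ih]
    have haval : ∀ j, a j = bf hn ((r 0).2 j) (min m n) := by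
      intro j
      have hj := haj j
      rw [hsnd2, hfst, sud_spec hn hσ j, qObs_stateRun] at hj
      exact hj
    have htr' : qTrans (stateRun hn (bf hn ((r 0).2 0)) (bf hn ((r 0).2 1)) m) a
        (r (m+1)).1 := by rw [← hfst]; exact htr
    have hgood := stateRun_trans hn (bf hn ((r 0).2 0)) (bf hn ((r 0).2 1)) m a
      (by
        intro hm
        have hmn : min m n = m := by omega
        rw [haval 0, haval 1, hmn]
        exact ⟨rfl, rfl⟩)
    have hkey := qTrans_det htr' hgood
    have h2 : (r (m+1)).2 = (r 0).2 := by rw [hsnd, hsnd2]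
    exact Prod.ext hkey h2

/-- The uniform deterministic strategy induced by a boolean function. -/
def mkStrat (n : ℕ) (g : ℕ → Bool) : Strategy (QSt n) Bool := fun s => {g (qObs 0 s)}

lemma mkStrat_mem (hn : 0 < n) (g : ℕ → Bool) (i : Fin 2) :
    IsStrategy (qEnv n hn) i (mkStrat n g) ∧ UniformStrat (qEnv n hn) i (mkStrat n g) ∧
      DetStrat (mkStrat n g) := by
  refine ⟨fun s => ⟨⟨_, rfl⟩, fun a _ => trivial⟩, ?_, fun s => ⟨_, rfl⟩⟩
  intro s t hst
  have hq : qObs 0 s = qObs 0 t := by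
    rw [qObs_indep 0 i s, qObs_indep 0 i t]
    exact hst
  simp [mkStrat, hq]

lemma bf_mkStrat (hn : 0 < n) (g : ℕ → Bool) (o : ℕ) (ho : o ≤ n) :
    bf hn (mkStrat n g) o = g o := by
  unfold bf mkStrat
  rw [qObs_stateOf hn 0 o ho]
  cases h : g o <;> simp [h]

/-- Pairing two individual strategies into a joint strategy. -/
def joinS (α β : Strategy (QSt n) Bool) : JointStrategy (Fin 2) (QSt n) Bool :=
  fun i => if i = 0 then α else β

@[simp] lemma joinS_zero (α β : Strategy (QSt n) Bool) : joinS α β 0 = α := rfl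
@[simp] lemma joinS_one (α β : Strategy (QSt n) Bool) : joinS α β 1 = β := rfl

lemma joinS_mem (hn : 0 < n) {α β : Strategy (QSt n) Bool}
    (hα : IsStrategy (qEnv n hn) 0 α ∧ UniformStrat (qEnv n hn) 0 α ∧ DetStrat α)
    (hβ : IsStrategy (qEnv n hn) 1 β ∧ UniformStrat (qEnv n hn) 1 β ∧ DetStrat β) :
    joinS α β ∈ SigmaUnifDet (qEnv n hn) := by
  intro i
  fin_cases i
  · exact hα
  · exact hβ

/-- The canonical run of a joint strategy. -/
noncomputable def mkRun (hn : 0 < n) (σ : JointStrategy (Fin 2) (QSt n) Bool) :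
    ℕ → GState (Fin 2) (QSt n) Bool :=
  fun m => (stateRun hn (bf hn (σ 0)) (bf hn (σ 1)) m, σ)

lemma mkRun_mem (hn : 0 < n) {σ : JointStrategy (Fin 2) (QSt n) Bool}
    (hσ : σ ∈ SigmaUnifDet (qEnv n hn)) :
    mkRun hn σ ∈ (stratSpace (qEnv n hn) (SigmaUnifDet (qEnv n hn))).runs := by
  refine ⟨rfl, hσ, fun m => ⟨rfl, fun j => bf hn (σ j) (min m n), fun j => ?_, ?_⟩⟩
  · rw [show (mkRun hn σ m).2 = σ from rfl, sud_spec hn hσ j,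
      show (mkRun hn σ m).1 = stateRun hn (bf hn (σ 0)) (bf hn (σ 1)) m from rfl,
      qObs_stateRun]
    exact rfl
  · exact stateRun_trans hn _ _ m _
      (by
        intro hm
        have hmn : min m n = m := by omega
        constructor
        · show bf hn (σ 0) (min m n) = _
          rw [hmn]
        · show bf hn (σ 1) (min m n) = _
          rw [hmn])


/-! ### Valuation lemmas -/

lemma inl_mem_stateRun (hn : 0 < n) (g₁ g₂ : ℕ → Bool) (x m : ℕ) :
    Sum.inl x ∈ qVal (stateRun hn g₁ g₂ m) ↔ x = min m n := by
  cases m with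
  | zero =>
    simp only [stateRun, qVal, Set.mem_singleton_iff, Sum.inl.injEq]
    omega
  | succ k =>
    simp only [stateRun, qVal, Set.mem_union, Set.mem_singleton_iff, Sum.inl.injEq]
    constructor
    · rintro ((h | h) | h)
      · omega
      · split at h <;> simp at h
      · split at h <;> simp at h
    · intro h
      left; left
      omega

lemma inr_mem_stateRun (hn : 0 < n) (g₁ g₂ : ℕ → Bool) (c : Bool) (m : ℕ) :
    Sum.inr c ∈ qVal (stateRun hn g₁ g₂ (m+1)) ↔
      (if c then g₂ else g₁) (min m (n-1)) = true := by
  simp only [stateRun, qVal, Set.mem_union, Set.mem_singleton_iff]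
  cases c <;>
    [cases h1 : g₁ (min m (n-1)); cases h2 : g₂ (min m (n-1))] <;>
      simp_all

/-! ### Basic satisfaction lemmas -/

lemma esat_impf {Gl Idx Loc PropV Var : Type} [DecidableEq Var] {M : IS Gl Idx Loc PropV} {φ ψ : ESL Idx PropV Var}
    {Γ : Var → Gl} {r : ℕ → Gl} {m : ℕ} :
    esat M (ESL.impf φ ψ) Γ r m ↔ (esat M φ Γ r m → esat M ψ Γ r m) := by
  simp only [ESL.impf, esat]
  tauto

lemma esat_iffF {Gl Idx Loc PropV Var : Type} [DecidableEq Var] {M : IS Gl Idx Loc PropV} {φ ψ : ESL Idx PropV Var}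
    {Γ : Var → Gl} {r : ℕ → Gl} {m : ℕ} :
    esat M (ESL.iffF φ ψ) Γ r m ↔ (esat M φ Γ r m ↔ esat M ψ Γ r m) := by
  simp only [ESL.iffF, esat, esat_impf]
  tauto

lemma esat_bigConj {Gl Idx Loc PropV Var : Type} [DecidableEq Var] {M : IS Gl Idx Loc PropV} (l : List (ESL Idx PropV Var))
    (Γ : Var → Gl) (r : ℕ → Gl) (m : ℕ) :
    esat M (bigConj l) Γ r m ↔ ∀ φ ∈ l, esat M φ Γ r m := by
  induction l with
  | nil => simp [bigConj, esat]
  | cons a t ih =>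
    show esat M a Γ r m ∧ esat M (bigConj t) Γ r m ↔ _
    rw [ih]
    simp

lemma sameLoc_str (hn : 0 < n) (Sig : Set (JointStrategy (Fin 2) (QSt n) Bool))
    (i : Fin 2) (g g' : GState (Fin 2) (QSt n) Bool) :
    (stratSpace (qEnv n hn) Sig).sameLoc (SIdx.str i) g g' ↔ g.2 i = g'.2 i := by
  simp [IS.sameLoc, stratSpace, sLoc]

/-! ### The `EX` lemma -/

lemma esat_EX (hn : 0 < n) {r : ℕ → GState (Fin 2) (QSt n) Bool}
    (hr : r ∈ (stratSpace (qEnv n hn) (SigmaUnifDet (qEnv n hn))).runs)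
    (p : ℕ ⊕ Bool) (Γ : Unit → GState (Fin 2) (QSt n) Bool) (m : ℕ) :
    esat (stratSpace (qEnv n hn) (SigmaUnifDet (qEnv n hn))) (ESL.EX (.atom p)) Γ r m ↔
      p ∈ qVal ((r (m+1)).1) := by
  show (¬ ∀ r' ∈ _, _ → ¬ _) ↔ _
  constructor
  · intro h
    push_neg at h
    obtain ⟨r', hr', hpre, hp⟩ := h
    have h0 : r' 0 = r 0 := hpre 0 (Nat.zero_le _)
    have e1 := run_struct hn hr' (m+1)
    have e2 := run_struct hn hr (m+1)
    rw [h0] at e1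
    have : r' (m+1) = r (m+1) := by rw [e1, e2]
    rw [← this]
    exact hp
  · intro hp h
    exact (h r hr fun k _ => rfl) hp


/-! ### Point characterisations -/

lemma esat_point_imp (hn : 0 < n) {r : ℕ → GState (Fin 2) (QSt n) Bool}
    (hr : r ∈ (stratSpace (qEnv n hn) (SigmaUnifDet (qEnv n hn))).runs)
    (x : ℕ) (hx : x < n) (c : Bool) (Γ : Unit → GState (Fin 2) (QSt n) Bool) (m' : ℕ) :
    esat (stratSpace (qEnv n hn) (SigmaUnifDet (qEnv n hn)))
      (ESL.impf (.atom (Sum.inl x)) (ESL.EX (.atom (Sum.inr c)))) Γ r m' ↔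
      (m' = x → (if c then bf hn ((r 0).2 1) else bf hn ((r 0).2 0)) x = true) := by
  have hst : ∀ k, (r k).1 = stateRun hn (bf hn ((r 0).2 0)) (bf hn ((r 0).2 1)) k :=
    fun k => by rw [run_struct hn hr k]
  rw [esat_impf]
  have hatom : esat (stratSpace (qEnv n hn) (SigmaUnifDet (qEnv n hn)))
      (.atom (Sum.inl x) : ESL (SIdx (Fin 2)) (ℕ ⊕ Bool) Unit) Γ r m' ↔ m' = x := by
    show Sum.inl x ∈ qVal ((r m').1) ↔ _
    rw [hst m', inl_mem_stateRun]
    omega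
  rw [hatom, esat_EX hn hr, hst (m'+1), inr_mem_stateRun]
  constructor
  · intro h hm
    subst hm
    have h2 := h rfl
    rwa [show min m' (n-1) = m' from by omega] at h2
  · intro h hm
    subst hm
    rw [show min m' (n-1) = m' from by omega]
    exact h rfl

/-- Characterisation of `val₂(x)`. -/
lemma esat_val2 (hn : 0 < n) {r : ℕ → GState (Fin 2) (QSt n) Bool}
    (hr : r ∈ (stratSpace (qEnv n hn) (SigmaUnifDet (qEnv n hn))).runs)
    (x : ℕ) (hx : x < n) (Γ : Unit → GState (Fin 2) (QSt n) Bool) (m : ℕ) :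
    esat (stratSpace (qEnv n hn) (SigmaUnifDet (qEnv n hn)))
      (.dk {SIdx.str 1} (ESL.impf (.atom (Sum.inl x)) (ESL.EX (.atom (Sum.inr true)))))
      Γ r m ↔ bf hn ((r 0).2 1) x = true := by
  show (∀ r' ∈ _, ∀ m', _ → _) ↔ _
  constructor
  · intro h
    have hcond : ∀ i ∈ ({SIdx.str 1} : Set (SIdx (Fin 2))),
        (stratSpace (qEnv n hn) (SigmaUnifDet (qEnv n hn))).sameLoc i (r x) (r m) := by
      intro i hi
      rw [Set.mem_singleton_iff] at hi
      subst hi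
      rw [sameLoc_str]
      rw [run_struct hn hr x, run_struct hn hr m]
    have h2 := h r hr x hcond
    rw [esat_point_imp hn hr x hx true Γ x] at h2
    simpa using h2 rfl
  · intro hb r' hr' m' hcond
    have hc := hcond (SIdx.str 1) (Set.mem_singleton _)
    rw [sameLoc_str] at hc
    have hc0 : (r' 0).2 1 = (r 0).2 1 := by
      have e1 := run_struct hn hr' m'
      have e2 := run_struct hn hr m
      rw [e1, e2] at hc
      exact hc
    rw [esat_point_imp hn hr' x hx true Γ m']
    intro _
    simpa [hc0] using hb

/-- Characterisation of a single conjunct of `agree(m)`. -/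
lemma esat_agreeItem (hn : 0 < n) {r : ℕ → GState (Fin 2) (QSt n) Bool}
    (hr : r ∈ (stratSpace (qEnv n hn) (SigmaUnifDet (qEnv n hn))).runs)
    (x : ℕ) (hx : x < n) (Γ : Unit → GState (Fin 2) (QSt n) Bool) (m : ℕ) :
    esat (stratSpace (qEnv n hn) (SigmaUnifDet (qEnv n hn)))
      (ESL.dk {SIdx.str 0, SIdx.str 1}
        (ESL.impf (.atom (Sum.inl x))
          (ESL.iffF (ESL.EX (.atom (Sum.inr false))) (ESL.EX (.atom (Sum.inr true))))))
      Γ r m ↔ bf hn ((r 0).2 0) x = bf hn ((r 0).2 1) x := by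
  have key : ∀ (r' : ℕ → GState (Fin 2) (QSt n) Bool),
      r' ∈ (stratSpace (qEnv n hn) (SigmaUnifDet (qEnv n hn))).runs → ∀ m',
      (esat (stratSpace (qEnv n hn) (SigmaUnifDet (qEnv n hn)))
        (ESL.impf (.atom (Sum.inl x))
          (ESL.iffF (ESL.EX (.atom (Sum.inr false))) (ESL.EX (.atom (Sum.inr true)))))
        Γ r' m' ↔
      (m' = x → (bf hn ((r' 0).2 0) x = true ↔ bf hn ((r' 0).2 1) x = true))) := by
    intro r' hr' m'
    rw [esat_impf, esat_iffF]
    have hst : ∀ k, (r' k).1 = stateRun hn (bf hn ((r' 0).2 0)) (bf hn ((r' 0).2 1)) k :=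
      fun k => by rw [run_struct hn hr' k]
    have hatom : esat (stratSpace (qEnv n hn) (SigmaUnifDet (qEnv n hn)))
        (.atom (Sum.inl x) : ESL (SIdx (Fin 2)) (ℕ ⊕ Bool) Unit) Γ r' m' ↔ m' = x := by
      show Sum.inl x ∈ qVal ((r' m').1) ↔ _
      rw [hst m', inl_mem_stateRun]
      omega
    rw [hatom, esat_EX hn hr', esat_EX hn hr', hst (m'+1), inr_mem_stateRun,
      inr_mem_stateRun]
    constructor
    · intro h hm
      subst hm
      have h2 := h rfl
      rwa [show min m' (n-1) = m' from by omega] at h2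
    · intro h hm
      subst hm
      rw [show min m' (n-1) = m' from by omega]
      exact h rfl
  show (∀ r' ∈ _, ∀ m', _ → _) ↔ _
  constructor
  · intro h
    have hcond : ∀ i ∈ ({SIdx.str 0, SIdx.str 1} : Set (SIdx (Fin 2))),
        (stratSpace (qEnv n hn) (SigmaUnifDet (qEnv n hn))).sameLoc i (r x) (r m) := by
      intro i hi
      rcases hi with hi | hi
      · subst hi
        rw [sameLoc_str, run_struct hn hr x, run_struct hn hr m]
      · rw [Set.mem_singleton_iff] at hi
        subst hi
        rw [sameLoc_str, run_struct hn hr x, run_struct hn hr m]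
    have h2 := h r hr x hcond
    rw [key r hr x] at h2
    have h3 := h2 rfl
    cases hb0 : bf hn ((r 0).2 0) x <;> cases hb1 : bf hn ((r 0).2 1) x <;>
      simp_all
  · intro hb r' hr' m' hcond
    have hc0 := hcond (SIdx.str 0) (by left; rfl)
    have hc1 := hcond (SIdx.str 1) (by right; exact Set.mem_singleton _)
    rw [sameLoc_str] at hc0 hc1
    have e1 := run_struct hn hr' m'
    have e2 := run_struct hn hr m
    rw [e1, e2] at hc0 hc1
    rw [key r' hr' m']
    intro _
    rw [hc0, hc1, hb]

/-- Characterisation of `agree(m)`. -/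
lemma esat_agreeF (hn : 0 < n) {r : ℕ → GState (Fin 2) (QSt n) Bool}
    (hr : r ∈ (stratSpace (qEnv n hn) (SigmaUnifDet (qEnv n hn))).runs)
    (m : ℕ) (hm : m ≤ n) (Γ : Unit → GState (Fin 2) (QSt n) Bool) (mm : ℕ) :
    esat (stratSpace (qEnv n hn) (SigmaUnifDet (qEnv n hn))) (agreeF m) Γ r mm ↔
      ∀ j < m, bf hn ((r 0).2 0) j = bf hn ((r 0).2 1) j := by
  rw [agreeF, esat_bigConj]
  constructor
  · intro h j hj
    have := h _ (List.mem_map_of_mem (List.mem_range.mpr hj))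
    rwa [esat_agreeItem hn hr j (by omega) Γ mm] at this
  · intro h φ hφ
    rw [List.mem_map] at hφ
    obtain ⟨j, hj, rfl⟩ := hφ
    rw [List.mem_range] at hj
    rw [esat_agreeItem hn hr j (by omega) Γ mm]
    exact h j hj

/-- Characterisation of `γ⁺`. -/
lemma esat_gplus (hn : 0 < n) {r : ℕ → GState (Fin 2) (QSt n) Bool}
    (hr : r ∈ (stratSpace (qEnv n hn) (SigmaUnifDet (qEnv n hn))).runs)
    (γ' : PForm n) (Γ : Unit → GState (Fin 2) (QSt n) Bool) (m : ℕ) :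
    esat (stratSpace (qEnv n hn) (SigmaUnifDet (qEnv n hn))) (gplus γ') Γ r m ↔
      PForm.eval (fun j => bf hn ((r 0).2 1) j.1) γ' := by
  induction γ' with
  | var j => exact esat_val2 hn hr j.1 j.isLt Γ m
  | neg φ ih =>
    show (¬ _) ↔ ¬ _
    rw [ih]
  | conj φ ψ ih1 ih2 =>
    show (_ ∧ _) ↔ (_ ∧ _)
    rw [ih1, ih2]


/-! ### The abstract alternation predicate -/

/-- Abstract meaning of `qLevels` in terms of the boolean strategy functions. -/
def Abs (n : ℕ) (γ : PForm n) : ℕ → (ℕ → Bool) → (ℕ → Bool) → Prop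
  | m, g₁, g₂ =>
    if h : m < n then
      (if m % 2 = 1 then
        ∀ g₂' : ℕ → Bool, (∀ j < m, g₁ j = g₂' j) → Abs n γ (m+1) g₁ g₂'
      else
        ∃ g₁' : ℕ → Bool, (∀ j < m, g₁' j = g₂ j) ∧ Abs n γ (m+1) g₁' g₂)
    else γ.eval (fun j => g₂ j.1)
  termination_by m => n - m
  decreasing_by all_goals omega

lemma Abs_congr (n : ℕ) (γ : PForm n) (m : ℕ)
    {g₁ g₁' g₂ g₂' : ℕ → Bool}
    (h₁ : ∀ j < n, g₁ j = g₁' j) (h₂ : ∀ j < n, g₂ j = g₂' j) :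
    Abs n γ m g₁ g₂ ↔ Abs n γ m g₁' g₂' := by
  rw [Abs, Abs]
  by_cases h : m < n
  · rw [dif_pos h, dif_pos h]
    by_cases hp : m % 2 = 1
    · rw [if_pos hp, if_pos hp]
      constructor
      · intro ha g hg
        rw [← Abs_congr n γ (m+1) h₁ (fun _ _ => rfl)]
        exact ha g (fun j hj => by rw [h₁ j (by omega)]; exact hg j hj)
      · intro ha g hg
        rw [Abs_congr n γ (m+1) h₁ (fun _ _ => rfl)]
        exact ha g (fun j hj => by rw [← h₁ j (by omega)]; exact hg j hj)
    · rw [if_neg hp, if_neg hp]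
      constructor
      · rintro ⟨g, hg, ha⟩
        exact ⟨g, fun j hj => by rw [← h₂ j (by omega)]; exact hg j hj,
          (Abs_congr n γ (m+1) (fun _ _ => rfl) h₂).mp ha⟩
      · rintro ⟨g, hg, ha⟩
        exact ⟨g, fun j hj => by rw [h₂ j (by omega)]; exact hg j hj,
          (Abs_congr n γ (m+1) (fun _ _ => rfl) h₂).mpr ha⟩
  · rw [dif_neg h, dif_neg h]
    have : (fun j : Fin n => g₂ j.1) = fun j : Fin n => g₂' j.1 := by
      funext j
      exact h₂ j.1 j.isLt
    rw [this]
  termination_by n - m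
  decreasing_by all_goals omega

/-! ### The main semantic lemma -/

lemma esat_qLevels (hn : 0 < n) (γ : PForm n) (m : ℕ) (h1 : 1 ≤ m) (h2 : m < n)
    {r : ℕ → GState (Fin 2) (QSt n) Bool}
    (hr : r ∈ (stratSpace (qEnv n hn) (SigmaUnifDet (qEnv n hn))).runs)
    (Γ : Unit → GState (Fin 2) (QSt n) Bool) (mm : ℕ) :
    esat (stratSpace (qEnv n hn) (SigmaUnifDet (qEnv n hn)))
      (qLevels n (gplus γ) m) Γ r mm ↔
      Abs n γ m (bf hn ((r 0).2 0)) (bf hn ((r 0).2 1)) := by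
  have hσ : (r 0).2 ∈ SigmaUnifDet (qEnv n hn) := hr.2.1
  -- the inner formula
  have inner_iff : ∀ (r' : ℕ → GState (Fin 2) (QSt n) Bool),
      r' ∈ (stratSpace (qEnv n hn) (SigmaUnifDet (qEnv n hn))).runs → ∀ m',
      (esat (stratSpace (qEnv n hn) (SigmaUnifDet (qEnv n hn)))
        (if h : m + 1 < n then qLevels n (gplus γ) (m+1) else gplus γ) Γ r' m' ↔
        Abs n γ (m+1) (bf hn ((r' 0).2 0)) (bf hn ((r' 0).2 1))) := by
    intro r' hr' m'
    by_cases h : m + 1 < n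
    · rw [dif_pos h]
      exact esat_qLevels hn γ (m+1) (by omega) h hr' Γ m'
    · rw [dif_neg h]
      rw [esat_gplus hn hr' γ Γ m']
      rw [Abs]
      rw [dif_neg (by omega)]
  rw [qLevels, Abs, dif_pos h2]
  by_cases hp : m % 2 = 1
  · rw [if_pos hp, if_pos hp]
    show (∀ r' ∈ _, ∀ m', _ → _) ↔ _
    constructor
    · intro h g₂' hg
      -- build the witness run
      set β := mkStrat n g₂' with hβ
      have hβm := mkStrat_mem hn g₂' 1
      have hjm : joinS ((r 0).2 0) β ∈ SigmaUnifDet (qEnv n hn) :=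
        joinS_mem hn (hσ 0) hβm
      set r' := mkRun hn (joinS ((r 0).2 0) β) with hr'def
      have hr' := mkRun_mem hn hjm
      have hcond : ∀ i ∈ ({SIdx.str 0} : Set (SIdx (Fin 2))),
          (stratSpace (qEnv n hn) (SigmaUnifDet (qEnv n hn))).sameLoc i (r' 0) (r mm) := by
        intro i hi
        rw [Set.mem_singleton_iff] at hi
        subst hi
        rw [sameLoc_str, run_struct hn hr mm]
        rfl
      have h2' := h r' hr' 0 hcond
      rw [esat_impf] at h2'
      have hr'0 : (r' 0).2 = joinS ((r 0).2 0) β := rfl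
      have hbf0 : bf hn ((r' 0).2 0) = bf hn ((r 0).2 0) := by rw [hr'0]; rfl
      have hbf1 : ∀ j < n, bf hn ((r' 0).2 1) j = g₂' j := by
        intro j hj
        rw [hr'0]
        show bf hn β j = g₂' j
        rw [hβ, bf_mkStrat hn g₂' j (by omega)]
      have hagr : esat (stratSpace (qEnv n hn) (SigmaUnifDet (qEnv n hn)))
          (agreeF m) Γ r' 0 := by
        rw [esat_agreeF hn hr' m (by omega) Γ 0]
        intro j hj
        rw [hbf0, hbf1 j (by omega)]
        exact hg j hj
      have h3 := h2' hagr
      rw [inner_iff r' hr' 0] at h3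
      rw [hbf0] at h3
      exact (Abs_congr n γ (m+1) (fun _ _ => rfl) hbf1).mp h3
    · intro h r' hr' m' hcond
      rw [esat_impf]
      intro hagr
      have hc := hcond (SIdx.str 0) (Set.mem_singleton _)
      rw [sameLoc_str, run_struct hn hr' m', run_struct hn hr mm] at hc
      have hc' : (r' 0).2 0 = (r 0).2 0 := hc
      rw [esat_agreeF hn hr' m (by omega) Γ m'] at hagr
      rw [inner_iff r' hr' m']
      have := h (bf hn ((r' 0).2 1)) (by
        intro j hj
        rw [← hc']
        exact hagr j hj)
      exact (Abs_congr n γ (m+1) (fun j _ => by rw [hc']) (fun _ _ => rfl)).mpr this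
  · rw [if_neg hp, if_neg hp]
    show (¬ ∀ r' ∈ _, ∀ m', _ → ¬ _) ↔ _
    constructor
    · intro h
      push_neg at h
      obtain ⟨r', hr', m', hcond, hconj⟩ := h
      have hagr : esat (stratSpace (qEnv n hn) (SigmaUnifDet (qEnv n hn)))
          (agreeF m) Γ r' m' := hconj.1
      have hinner := hconj.2
      have hc := hcond (SIdx.str 1) (Set.mem_singleton _)
      rw [sameLoc_str, run_struct hn hr' m', run_struct hn hr mm] at hc
      have hc' : (r' 0).2 1 = (r 0).2 1 := hc
      rw [esat_agreeF hn hr' m (by omega) Γ m'] at hagr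
      rw [inner_iff r' hr' m'] at hinner
      refine ⟨bf hn ((r' 0).2 0), fun j hj => by rw [← hc']; exact hagr j hj, ?_⟩
      exact (Abs_congr n γ (m+1) (fun _ _ => rfl) (fun j _ => by rw [hc'])).mp hinner
    · rintro ⟨g₁', hg, habs⟩ h
      set α := mkStrat n g₁' with hα
      have hαm := mkStrat_mem hn g₁' 0
      have hjm : joinS α ((r 0).2 1) ∈ SigmaUnifDet (qEnv n hn) :=
        joinS_mem hn hαm (hσ 1)
      set r' := mkRun hn (joinS α ((r 0).2 1)) with hr'def
      have hr' := mkRun_mem hn hjm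
      have hcond : ∀ i ∈ ({SIdx.str 1} : Set (SIdx (Fin 2))),
          (stratSpace (qEnv n hn) (SigmaUnifDet (qEnv n hn))).sameLoc i (r' 0) (r mm) := by
        intro i hi
        rw [Set.mem_singleton_iff] at hi
        subst hi
        rw [sameLoc_str, run_struct hn hr mm]
        rfl
      have hr'0 : (r' 0).2 = joinS α ((r 0).2 1) := rfl
      have hbf1 : bf hn ((r' 0).2 1) = bf hn ((r 0).2 1) := by rw [hr'0]; rfl
      have hbf0 : ∀ j < n, bf hn ((r' 0).2 0) j = g₁' j := by
        intro j hj
        rw [hr'0]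
        show bf hn α j = g₁' j
        rw [hα, bf_mkStrat hn g₁' j (by omega)]
      refine h r' hr' 0 hcond ⟨?_, ?_⟩
      · rw [esat_agreeF hn hr' m (by omega) Γ 0]
        intro j hj
        rw [hbf0 j (by omega), hbf1]
        exact hg j hj
      · rw [inner_iff r' hr' 0, hbf1]
        exact (Abs_congr n γ (m+1) hbf0 (fun _ _ => rfl)).mpr habs
  termination_by n - m
  decreasing_by all_goals omega


/-! ### Combinatorial part: `Abs` matches `altTruth` -/

/-- Extend a boolean function on `[0,m)` to an assignment (default `false`). -/
def extv (n : ℕ) (g : ℕ → Bool) (m : ℕ) : Fin n → Bool :=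
  fun j => if j.1 < m then g j.1 else false

lemma altTruth_congr (n : ℕ) (γ : PForm n) (k : ℕ) {v w : Fin n → Bool}
    (h : ∀ j : Fin n, j.1 < k → v j = w j) :
    altTruth n γ k v ↔ altTruth n γ k w := by
  conv_lhs => rw [altTruth]
  conv_rhs => rw [altTruth]
  by_cases hk : k < n
  · rw [dif_pos hk, dif_pos hk]
    have hupd : ∀ b : Bool, ∀ j : Fin n, j.1 < k + 1 →
        Function.update v ⟨k, hk⟩ b j = Function.update w ⟨k, hk⟩ b j := by
      intro b j hj
      rcases eq_or_ne j ⟨k, hk⟩ with rfl | hne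
      · simp
      · rw [Function.update_of_ne hne, Function.update_of_ne hne]
        exact h j (by
          have : j.1 ≠ k := fun hh => hne (Fin.ext hh)
          omega)
    by_cases hp : k % 2 = 0
    · rw [if_pos hp, if_pos hp]
      exact exists_congr fun b => altTruth_congr n γ (k+1) (hupd b)
    · rw [if_neg hp, if_neg hp]
      exact forall_congr' fun b => altTruth_congr n γ (k+1) (hupd b)
  · rw [dif_neg hk, dif_neg hk]
    have : v = w := funext fun j => h j (by omega)
    rw [this]
  termination_by n - k
  decreasing_by all_goals omega

lemma abs_alt (n : ℕ) (hev : Even n) (γ : PForm n) (m : ℕ) (hm : m ≤ n)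
    (g₁ g₂ : ℕ → Bool) :
    (m % 2 = 1 → (Abs n γ m g₁ g₂ ↔ altTruth n γ m (extv n g₁ m))) ∧
    (m % 2 = 0 → (Abs n γ m g₁ g₂ ↔ altTruth n γ m (extv n g₂ m))) := by
  have hn2 : n % 2 = 0 := Nat.even_iff.mp hev
  by_cases hlt : m < n
  case neg =>
    have hmn : m = n := by omega
    constructor
    · intro h
      omega
    · intro _
      rw [Abs, dif_neg (by omega)]
      conv_rhs => rw [altTruth]
      rw [dif_neg (by omega)]
      have he : extv n g₂ m = fun j : Fin n => g₂ j.1 := by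
        funext j
        have hjn := j.isLt
        show (if j.1 < m then g₂ j.1 else false) = g₂ j.1
        rw [if_pos (by omega)]
      rw [he]
  case pos =>
    constructor
    · intro hp
      rw [Abs, dif_pos hlt, if_pos hp]
      conv_rhs => rw [altTruth]
      rw [dif_pos hlt, if_neg (by omega)]
      constructor
      · intro h b
        have h2 := h (fun j => if j < m then g₁ j else b) (fun j hj => by simp [hj])
        have h3 := ((abs_alt n hev γ (m+1) (by omega) g₁ _).2 (by omega)).mp h2
        refine (altTruth_congr n γ (m+1) ?_).mp h3
        intro j hj
        rcases eq_or_ne j ⟨m, hlt⟩ with rfl | hne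
        · simp [extv]
        · have hjm : j.1 < m := by
            have : j.1 ≠ m := fun hh => hne (Fin.ext hh)
            omega
          rw [Function.update_of_ne hne]
          simp [extv, hjm, hj]
      · intro h g₂' hg
        have h2 := h (g₂' m)
        refine ((abs_alt n hev γ (m+1) (by omega) g₁ g₂').2 (by omega)).mpr ?_
        refine (altTruth_congr n γ (m+1) ?_).mp h2
        intro j hj
        rcases eq_or_ne j ⟨m, hlt⟩ with rfl | hne
        · simp [extv]
        · have hjm : j.1 < m := by
            have : j.1 ≠ m := fun hh => hne (Fin.ext hh)
            omega
          rw [Function.update_of_ne hne]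
          simp [extv, hjm, hj, hg j.1 hjm]
    · intro hp
      rw [Abs, dif_pos hlt, if_neg (by omega)]
      conv_rhs => rw [altTruth]
      rw [dif_pos hlt, if_pos hp]
      constructor
      · rintro ⟨g₁', hg, ha⟩
        refine ⟨g₁' m, ?_⟩
        have h3 := ((abs_alt n hev γ (m+1) (by omega) g₁' g₂).1 (by omega)).mp ha
        refine (altTruth_congr n γ (m+1) ?_).mp h3
        intro j hj
        rcases eq_or_ne j ⟨m, hlt⟩ with rfl | hne
        · simp [extv]
        · have hjm : j.1 < m := by
            have : j.1 ≠ m := fun hh => hne (Fin.ext hh)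
            omega
          rw [Function.update_of_ne hne]
          simp [extv, hjm, hj, hg j.1 hjm]
      · rintro ⟨b, hb⟩
        refine ⟨fun j => if j < m then g₂ j else b, fun j hj => by simp [hj], ?_⟩
        refine ((abs_alt n hev γ (m+1) (by omega) _ g₂).1 (by omega)).mpr ?_
        refine (altTruth_congr n γ (m+1) ?_).mp hb
        intro j hj
        rcases eq_or_ne j ⟨m, hlt⟩ with rfl | hne
        · simp [extv]
        · have hjm : j.1 < m := by
            have : j.1 ≠ m := fun hh => hne (Fin.ext hh)
            omega
          rw [Function.update_of_ne hne]
          simp [extv, hjm, hj]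
  termination_by n - m
  decreasing_by all_goals omega

end Reduction

/-- the reduction in Theorem 4 of the paper: the QBF
`∃x₁∀x₂…Qₙxₙ(γ)` is true iff `Env_φ, Σ^{unif,det}(Env_φ) ⊨ φ*`. -/
theorem qbf_iff_formula
    (n : ℕ) (hn : 0 < n) (hev : Even n) (γ : PForm n)
    (Γ : Unit → GState (Fin 2) (QSt n) Bool) :
    QBFtrue n γ ↔
      ∀ r ∈ (stratSpace (qEnv n hn) (SigmaUnifDet (qEnv n hn))).runs,
        esat (stratSpace (qEnv n hn) (SigmaUnifDet (qEnv n hn)))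
          (qbfFormula n γ) Γ r 0 := by
  have hn2 : n % 2 = 0 := Nat.even_iff.mp hev
  have h1n : 1 < n := by omega
  -- Step A : the formula `φ*` asserts the existence of a point satisfying `qLevels 1`
  have hform : ∀ r : ℕ → GState (Fin 2) (QSt n) Bool,
      (esat (stratSpace (qEnv n hn) (SigmaUnifDet (qEnv n hn))) (qbfFormula n γ) Γ r 0 ↔
        ∃ r' ∈ (stratSpace (qEnv n hn) (SigmaUnifDet (qEnv n hn))).runs, ∃ m',
          esat (stratSpace (qEnv n hn) (SigmaUnifDet (qEnv n hn)))
            (qLevels n (gplus γ) 1) Γ r' m') := by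
    intro r
    show (¬ ∀ r' ∈ _, ∀ m', _ → ¬ _) ↔ _
    constructor
    · intro h
      by_contra hno
      push_neg at hno
      exact h (fun r' hr' m' _ => hno r' hr' m')
    · rintro ⟨r', hr', m', hψ⟩ hall
      exact hall r' hr' m' (fun i hi => absurd hi (Set.notMem_empty i)) hψ
  -- a default run, witnessing nonemptiness of the set of runs
  have hσ0 : joinS (mkStrat n (fun _ => false)) (mkStrat n (fun _ => false)) ∈
      SigmaUnifDet (qEnv n hn) :=
    joinS_mem hn (mkStrat_mem hn _ 0) (mkStrat_mem hn _ 1)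
  have hr₀ := mkRun_mem hn hσ0
  -- Step B : reformulate the right-hand side
  have hrhs : (∀ r ∈ (stratSpace (qEnv n hn) (SigmaUnifDet (qEnv n hn))).runs,
      esat (stratSpace (qEnv n hn) (SigmaUnifDet (qEnv n hn))) (qbfFormula n γ) Γ r 0) ↔
      ∃ r' ∈ (stratSpace (qEnv n hn) (SigmaUnifDet (qEnv n hn))).runs, ∃ m',
        esat (stratSpace (qEnv n hn) (SigmaUnifDet (qEnv n hn)))
          (qLevels n (gplus γ) 1) Γ r' m' := by
    constructor
    · intro h
      exact (hform _).mp (h _ hr₀)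
    · intro hex r hr
      exact (hform r).mpr hex
  rw [hrhs]
  -- Step C : the existential statement is equivalent to `∃ g₁ g₂, Abs n γ 1 g₁ g₂`
  have hC : (∃ r' ∈ (stratSpace (qEnv n hn) (SigmaUnifDet (qEnv n hn))).runs, ∃ m',
      esat (stratSpace (qEnv n hn) (SigmaUnifDet (qEnv n hn)))
        (qLevels n (gplus γ) 1) Γ r' m') ↔ ∃ g₁ g₂ : ℕ → Bool, Abs n γ 1 g₁ g₂ := by
    constructor
    · rintro ⟨r', hr', m', hψ⟩
      exact ⟨_, _, (esat_qLevels hn γ 1 le_rfl h1n hr' Γ m').mp hψ⟩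
    · rintro ⟨g₁, g₂, habs⟩
      have hjm : joinS (mkStrat n g₁) (mkStrat n g₂) ∈ SigmaUnifDet (qEnv n hn) :=
        joinS_mem hn (mkStrat_mem hn _ 0) (mkStrat_mem hn _ 1)
      have hr' := mkRun_mem hn hjm
      refine ⟨_, hr', 0, (esat_qLevels hn γ 1 le_rfl h1n hr' Γ 0).mpr ?_⟩
      have e0 : (mkRun hn (joinS (mkStrat n g₁) (mkStrat n g₂)) 0).2 =
          joinS (mkStrat n g₁) (mkStrat n g₂) := rfl
      rw [e0]
      refine (Abs_congr n γ 1 (g₁ := g₁) (g₂ := g₂) ?_ ?_).mp habs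
      · intro j hj
        exact (bf_mkStrat hn g₁ j (by omega)).symm
      · intro j hj
        exact (bf_mkStrat hn g₂ j (by omega)).symm
  rw [hC]
  -- Step D : the combinatorial equivalence with QBF truth
  unfold QBFtrue
  rw [altTruth, dif_pos hn, if_pos (by omega)]
  constructor
  · rintro ⟨b, hb⟩
    refine ⟨fun _ => b, fun _ => b,
      ((abs_alt n hev γ 1 (by omega) _ _).1 rfl).mpr ?_⟩
    refine (altTruth_congr n γ 1 ?_).mp hb
    intro j hj
    have hj0 : j = ⟨0, hn⟩ := Fin.ext (show j.1 = 0 by omega)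
    subst hj0
    simp [extv]
  · rintro ⟨g₁, g₂, habs⟩
    have h3 := ((abs_alt n hev γ 1 (by omega) g₁ g₂).1 rfl).mp habs
    refine ⟨g₁ 0, (altTruth_congr n γ 1 ?_).mp h3⟩
    intro j hj
    have hj0 : j = ⟨0, hn⟩ := Fin.ext (show j.1 = 0 by omega)
    subst hj0
    simp [extv]

end Paper
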